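/- Let n ≥ 1 and c ≥ 1. Let y : Fin n → (Fin c → ℝ) be labels such that each y_i is a standard basis vector (one-hot vector) of ℝ^c. Let Λ be a finite type of leaves and leaf : Fin n → Λ a surjective assignment of data points to leaves. For each ℓ ∈ Λ let w_ℓ = #{i : leaf i = ℓ} (a positive number by surjectivity), let v_ℓ = (1 / w_ℓ) · ∑_{i : leaf i = ℓ} y_i, and set ŷ_i = v_{leaf i}. Then the weighted Gini impurity (1/n) · ∑_{ℓ} w_ℓ · (1 − ∑_{k} (v_ℓ k)²) equals the mean squared error (1/n) · ∑_{i} ∑_{k} (y_i k − ŷ_i k)². -/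

import Mathlib

open Finset in
/-- For one-hot labels, the weighted Gini impurity of a tree partition equals the
mean squared error of the tree predictions. -/
theorem gini_eq_mse
    (n c : ℕ) (hn : 1 ≤ n) (hc : 1 ≤ c)
    (y : Fin n → Fin c → ℝ) (hy : ∀ i, ∃ k : Fin c, y i = Pi.single k 1)
    (Λ : Type) [Fintype Λ] [DecidableEq Λ] (leaf : Fin n → Λ) (hleaf : Function.Surjective leaf)
    (w : Λ → ℝ)
    (hw : ∀ ℓ, w ℓ = ((Finset.univ.filter (fun i => leaf i = ℓ)).card : ℝ))
    (v : Λ → Fin c → ℝ)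
    (hv : ∀ ℓ, v ℓ = (1 / w ℓ) • ∑ i ∈ Finset.univ.filter (fun i => leaf i = ℓ), y i)
    (yhat : Fin n → Fin c → ℝ) (hyhat : ∀ i, yhat i = v (leaf i)) :
    (1 / (n : ℝ)) * ∑ ℓ, w ℓ * (1 - ∑ k, (v ℓ k) ^ 2)
      = (1 / (n : ℝ)) * ∑ i, ∑ k, (y i k - yhat i k) ^ 2 := by
  congr 1
  rw [← Finset.sum_fiberwise_of_maps_to (t := Finset.univ) (g := leaf)
    (fun x _ => Finset.mem_univ _) (fun i => ∑ k, (y i k - yhat i k) ^ 2)]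
  refine Finset.sum_congr rfl fun ℓ _ => ?_
  set S := Finset.univ.filter (fun i => leaf i = ℓ) with hS
  have hwne : w ℓ ≠ 0 := by
    rw [hw]
    obtain ⟨i, hi⟩ := hleaf ℓ
    have : S.Nonempty := ⟨i, by simp [hS, hi]⟩
    exact_mod_cast (Nat.cast_pos.mpr (Finset.card_pos.mpr this)).ne'
  have hsum : ∀ k, ∑ i ∈ S, y i k = w ℓ * v ℓ k := by
    intro k
    have hvk : v ℓ k = (1 / w ℓ) * ∑ i ∈ S, y i k := by
      rw [hv]; simp [Finset.sum_apply, hS]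
    rw [hvk]; field_simp
  have hone : ∀ i : Fin n, ∑ k, (y i k) ^ 2 = 1 := by
    intro i
    obtain ⟨k0, hk0⟩ := hy i
    rw [hk0]
    simp [Pi.single_apply, ite_pow]
  have expand : ∀ i ∈ S, ∑ k, (y i k - yhat i k) ^ 2
      = (∑ k, (y i k) ^ 2) - 2 * (∑ k, y i k * v ℓ k) + ∑ k, (v ℓ k) ^ 2 := by
    intro i hi
    have hli : leaf i = ℓ := (Finset.mem_filter.mp hi).2
    rw [hyhat, hli, Finset.mul_sum, ← Finset.sum_sub_distrib, ← Finset.sum_add_distrib]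
    exact Finset.sum_congr rfl fun k _ => by ring
  rw [Finset.sum_congr rfl expand, Finset.sum_add_distrib, Finset.sum_sub_distrib]
  have h1 : ∑ i ∈ S, ∑ k, (y i k) ^ 2 = w ℓ := by
    simp [hone, hw, hS]
  have h2 : ∑ i ∈ S, 2 * (∑ k, y i k * v ℓ k) = 2 * (w ℓ * ∑ k, (v ℓ k) ^ 2) := by
    rw [← Finset.mul_sum, Finset.sum_comm]
    congr 1
    rw [Finset.mul_sum]
    refine Finset.sum_congr rfl fun k _ => ?_
    rw [← Finset.sum_mul, hsum k]; ring
  have h3 : ∑ i ∈ S, ∑ k, (v ℓ k) ^ 2 = w ℓ * ∑ k, (v ℓ k) ^ 2 := by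
    rw [Finset.sum_const, hw, hS, nsmul_eq_mul]
  rw [h1, h2, h3]; ring
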